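/- Let λ be a real algebraic number with λ > 1 such that −λ⁻¹ is a Galois conjugate of λ. Then for every Galois conjugate μ of λ, the number −μ⁻¹ is also a Galois conjugate of λ, and the degree [ℚ(λ):ℚ] is even. -/

import Mathlib

open Polynomial

/-- The Galois conjugates of a real algebraic number: the complex roots of its
minimal polynomial over `ℚ`. -/
def galoisConjugates (x : ℝ) : Set ℂ :=
  {z : ℂ | Polynomial.aeval z (minpoly ℚ x) = 0}

private lemma aeval_reverse_zero_iff (p : ℚ[X]) {S : Type*} [Field S] [Algebra ℚ S]
    {z : S} (hz : z ≠ 0) : (aeval z p.reverse = 0 ↔ aeval z⁻¹ p = 0) := by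
  have : Invertible z⁻¹ := invertibleOfNonzero (inv_ne_zero hz)
  have h := eval₂_reverse_eq_zero_iff (algebraMap ℚ S) z⁻¹ p
  rw [invOf_eq_inv, inv_inv] at h
  simpa [aeval_def] using h

private lemma even_card_of_invol {α : Type*} [DecidableEq α] (S : Finset α) (f : α → α)
    (hmem : ∀ a ∈ S, f a ∈ S) (hinv : ∀ a ∈ S, f (f a) = a) (hfix : ∀ a ∈ S, f a ≠ a) :
    Even S.card := by
  induction S using Finset.strongInduction with
  | _ S ih =>
    rcases S.eq_empty_or_nonempty with rfl | ⟨a, ha⟩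
    · simp
    · have hfa : f a ∈ S := hmem a ha
      have hne : f a ≠ a := hfix a ha
      have hsub : ({a, f a} : Finset α) ⊆ S := by
        intro x hx
        simp only [Finset.mem_insert, Finset.mem_singleton] at hx
        rcases hx with rfl | rfl
        · exact ha
        · exact hfa
      set T := S \ {a, f a} with hT
      have hTs : T ⊂ S :=
        Finset.sdiff_ssubset hsub (by simp)
      have hmemT : ∀ b, b ∈ T ↔ b ∈ S ∧ b ≠ a ∧ b ≠ f a := by
        intro b
        simp [hT, and_assoc]
      have hcard : S.card = T.card + 2 := by
        have h2 : ({a, f a} : Finset α).card = 2 := by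
          rw [Finset.card_insert_of_notMem (by simpa using hne.symm), Finset.card_singleton]
        have h3 := Finset.card_le_card hsub
        have h4 := Finset.card_sdiff_of_subset hsub
        rw [← hT] at h4
        rw [h2] at h3 h4
        omega
      have hTeven : Even T.card := by
        refine ih T hTs ?_ ?_ ?_
        · intro b hb
          rw [hmemT] at hb ⊢
          obtain ⟨hbS, hba, hbfa⟩ := hb
          refine ⟨hmem b hbS, ?_, ?_⟩
          · intro h
            apply hbfa
            rw [← hinv b hbS, h]
          · intro h
            apply hba
            have := congrArg f h
            rwa [hinv b hbS, hinv a ha] at this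
        · intro b hb
          exact hinv b ((hmemT b).mp hb).1
        · intro b hb
          exact hfix b ((hmemT b).mp hb).1
      rw [hcard]
      exact hTeven.add even_two

theorem neg_inv_conjugate_forces_even_degree (l : ℝ) (halg : IsAlgebraic ℚ l)
    (hl : 1 < l) (hconj : (-((l : ℂ))⁻¹) ∈ galoisConjugates l) :
    (∀ μ ∈ galoisConjugates l, (-μ⁻¹) ∈ galoisConjugates l) ∧
    Even (minpoly ℚ l).natDegree := by
  have hint : IsIntegral ℚ l := halg.isIntegral
  set p := minpoly ℚ l with hp
  have hirr : Irreducible p := minpoly.irreducible hint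
  have hmonic : p.Monic := minpoly.monic hint
  have hpl : aeval l p = 0 := minpoly.aeval ℚ l
  have hne : p ≠ 0 := minpoly.ne_zero hint
  have hl0 : (0 : ℝ) < l := lt_trans one_pos hl
  -- the constant coefficient is nonzero
  have hc0 : p.coeff 0 ≠ 0 := by
    intro h
    have hXdvd : X ∣ p := X_dvd_iff.mpr h
    obtain ⟨r, hr⟩ := hXdvd
    rcases hirr.isUnit_or_isUnit hr with hu | hu
    · exact Polynomial.not_isUnit_X hu
    · have hl' : aeval l p = l * aeval l r := by rw [hr]; simp
      rw [hpl] at hl'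
      have : aeval l r = 0 := by
        rcases mul_eq_zero.mp hl'.symm with h' | h'
        · exact absurd h' (ne_of_gt hl0)
        · exact h'
      obtain ⟨u, hu'⟩ := hu
      have : IsUnit (aeval l r) := by
        rw [← hu']
        exact (aeval l).isUnit_map u.isUnit
      rw [‹aeval l r = 0›] at this
      exact not_isUnit_zero this
  -- roots of p are nonzero
  have hroot_ne : ∀ z : ℂ, aeval z p = 0 → z ≠ 0 := by
    intro z hz hz0
    rw [hz0] at hz
    apply hc0
    have : aeval (0 : ℂ) p = algebraMap ℚ ℂ (p.coeff 0) := by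
      rw [aeval_def, eval₂_at_zero]
    rw [this] at hz
    exact (map_eq_zero_iff _ (algebraMap ℚ ℂ).injective).mp hz
  -- the auxiliary polynomial q with roots -μ⁻¹
  set q : ℚ[X] := p.reverse.comp (-X) with hq
  have haeval_q : ∀ {S : Type} [Field S] [Algebra ℚ S] (z : S), z ≠ 0 →
      (aeval z q = 0 ↔ aeval (-z⁻¹) p = 0) := by
    intro S _ _ z hz
    have h1 : aeval z q = aeval (-z) p.reverse := by
      rw [hq, aeval_comp]; simp
    rw [h1, aeval_reverse_zero_iff p (neg_ne_zero.mpr hz), inv_neg]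
  -- l is a root of q
  have hql : aeval l q = 0 := by
    rw [haeval_q l (ne_of_gt hl0)]
    -- transfer hconj from ℂ to ℝ
    have hc : aeval ((-l⁻¹ : ℝ) : ℂ) p = 0 := by
      have : ((-l⁻¹ : ℝ) : ℂ) = -((l : ℂ))⁻¹ := by push_cast; ring
      rw [this]
      exact hconj
    have : ((aeval (-l⁻¹ : ℝ) p : ℝ) : ℂ) = aeval ((-l⁻¹ : ℝ) : ℂ) p := by
      rw [← Complex.coe_algebraMap, aeval_algebraMap_apply]
    rw [hc] at this
    exact_mod_cast this
  -- p divides q, and q = p * (nonzero constant)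
  have hdvd : p ∣ q := minpoly.dvd ℚ l hql
  obtain ⟨r, hr⟩ := hdvd
  have hq_ne : q ≠ 0 := by
    intro h
    have h2 : q.comp (-X) = p.reverse := by
      rw [hq, comp_assoc]
      simp
    rw [h, zero_comp] at h2
    exact hne (reverse_eq_zero.mp h2.symm)
  have hr_ne : r ≠ 0 := by
    intro h; rw [h, mul_zero] at hr; exact hq_ne hr
  have hdeg : q.natDegree ≤ p.natDegree := by
    have : q.natDegree = p.reverse.natDegree * (-X : ℚ[X]).natDegree := natDegree_comp
    rw [this]
    have : (-X : ℚ[X]).natDegree = 1 := by simp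
    rw [this, mul_one]
    exact reverse_natDegree_le p
  have hrdeg : r.natDegree = 0 := by
    have := natDegree_mul hne hr_ne
    rw [← hr] at this
    omega
  have hr_eval : ∀ {S : Type} [Field S] [Algebra ℚ S] (z : S),
      (aeval z q = 0 ↔ aeval z p = 0) := by
    intro S _ _ z
    rw [hr, map_mul]
    have : r = C (r.coeff 0) := (Polynomial.eq_C_of_natDegree_eq_zero hrdeg)
    rw [this, aeval_C]
    have hc : r.coeff 0 ≠ 0 := by
      intro h
      apply hr_ne
      rw [this, h, map_zero]
    constructor
    · intro h
      rcases mul_eq_zero.mp h with h' | h'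
      · exact h'
      · exact absurd ((map_eq_zero_iff _ (algebraMap ℚ S).injective).mp h') hc
    · intro h; rw [h, zero_mul]
  -- first claim
  have claim1 : ∀ μ ∈ galoisConjugates l, (-μ⁻¹) ∈ galoisConjugates l := by
    intro μ hμ
    have hμ0 : μ ≠ 0 := hroot_ne μ hμ
    have : aeval (-μ⁻¹) q = 0 := by
      rw [haeval_q (-μ⁻¹) (by simp [hμ0])]
      simpa [inv_neg, inv_inv] using (show aeval μ p = 0 from hμ)
    exact (hr_eval (-μ⁻¹)).mp this
  refine ⟨claim1, ?_⟩
  -- second claim: even degree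
  set P : ℂ[X] := p.map (algebraMap ℚ ℂ) with hP
  have hP_ne : P ≠ 0 := (Polynomial.map_ne_zero_iff (algebraMap ℚ ℂ).injective).mpr hne
  have hmemP : ∀ z : ℂ, z ∈ P.roots.toFinset ↔ aeval z p = 0 := by
    intro z
    rw [Multiset.mem_toFinset, mem_roots hP_ne, IsRoot.def, hP, eval_map, ← aeval_def]
  have hnodup : P.roots.Nodup := nodup_roots (hirr.separable.map)
  have hcard : P.roots.toFinset.card = p.natDegree := by
    rw [Multiset.toFinset_card_of_nodup hnodup]
    exact IsAlgClosed.card_roots_map_eq_natDegree_of_injective p (algebraMap ℚ ℂ).injective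
  rw [← hcard]
  apply even_card_of_invol _ (fun z => -z⁻¹)
  · intro a ha
    rw [hmemP] at ha ⊢
    exact claim1 a ha
  · intro a _
    simp [inv_neg, inv_inv]
  · intro a ha
    rw [hmemP] at ha
    intro hfix
    -- a² = -1, so p divides X² + 1, contradicting p l = 0 with l real
    have ha0 : a ≠ 0 := hroot_ne a ha
    have ha2 : a ^ 2 = -1 := by
      have : -a⁻¹ * a = a * a := by rw [hfix]
      field_simp at this
      rw [sq]
      linear_combination -this
    have hX2 : aeval a ((X : ℚ[X]) ^ 2 + 1) = 0 := by
      simp [ha2]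
    have hpeq : p = minpoly ℚ a :=
      minpoly.eq_of_irreducible_of_monic hirr ha hmonic
    have hdvd2 : p ∣ (X : ℚ[X]) ^ 2 + 1 := hpeq ▸ minpoly.dvd ℚ a hX2
    obtain ⟨s, hs⟩ := hdvd2
    have : aeval l ((X : ℚ[X]) ^ 2 + 1) = 0 := by
      rw [hs, map_mul, hpl, zero_mul]
    simp only [map_add, map_pow, aeval_X, map_one] at this
    nlinarith
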